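/- (Theorem 1, λ-H representation: uniqueness up to rigid motion.) Let U ⊆ ℝ² be a nonempty connected open set and let φ, ψ : ℝ² → ℝ³ be two conformal immersions on U with the same conformal factor λ. Let n_φ := (φ_u × φ_v)/‖φ_u × φ_v‖ and n_ψ := (ψ_u × ψ_v)/‖ψ_u × ψ_v‖ be their unit normals, and suppose that on all of U the mean curvatures agree, ⟨Δφ, n_φ⟩/(2λ²) = ⟨Δψ, n_ψ⟩/(2λ²), and the quantities μ agree, (∂_z φ_z, n_φ) = (∂_z ψ_z, n_ψ). Then ψ differs from φ by a rigid motion: there exist a rotation matrix A ∈ SO(3) and a vector b ∈ ℝ³ such that ψ(p) = A·φ(p) + b for all p ∈ U. -/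

import Mathlib

open Complex

noncomputable section

/-- Euclidean 3-space. -/
abbrev E3 : Type := EuclideanSpace ℝ (Fin 3)

/-- Partial derivative in the first (u) coordinate direction. -/
def pu {F : Type} [NormedAddCommGroup F] [NormedSpace ℝ F]
    (f : ℝ × ℝ → F) (p : ℝ × ℝ) : F := fderiv ℝ f p (1, 0)

/-- Partial derivative in the second (v) coordinate direction. -/
def pv {F : Type} [NormedAddCommGroup F] [NormedSpace ℝ F]
    (f : ℝ × ℝ → F) (p : ℝ × ℝ) : F := fderiv ℝ f p (0, 1)

/-- Cross product on ℝ³. -/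
def cross (a b : E3) : E3 :=
  (WithLp.equiv 2 (Fin 3 → ℝ)).symm
    ![a 1 * b 2 - a 2 * b 1, a 2 * b 0 - a 0 * b 2, a 0 * b 1 - a 1 * b 0]

/-- The Euclidean inner product on ℝ³. -/
def ip (a b : E3) : ℝ := @inner ℝ _ _ a b

/-- `φ` is a smooth conformal immersion on the open set `U ⊆ ℝ²` with
(smooth, positive) conformal factor `lam`:  ⟨φ_u,φ_u⟩ = λ², ⟨φ_v,φ_v⟩ = λ²,
⟨φ_u,φ_v⟩ = 0 at every point of `U`. -/
def IsConfImm (U : Set (ℝ × ℝ)) (φ : ℝ × ℝ → E3) (lam : ℝ × ℝ → ℝ) : Prop :=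
  IsOpen U ∧ ContDiffOn ℝ (⊤ : ℕ∞) φ U ∧ ContDiffOn ℝ (⊤ : ℕ∞) lam U ∧
    ∀ p ∈ U, 0 < lam p ∧
      ip (pu φ p) (pu φ p) = (lam p) ^ 2 ∧
      ip (pv φ p) (pv φ p) = (lam p) ^ 2 ∧
      ip (pu φ p) (pv φ p) = 0

/-- Complexification ℝ³ ↪ ℂ³. -/
def toC (x : E3) : Fin 3 → ℂ := fun j => (x j : ℂ)

/-- Complex-bilinear dot product on ℂ³:  (a,b) = Σⱼ aⱼ bⱼ. -/
def cdot (a b : Fin 3 → ℂ) : ℂ := ∑ j, a j * b j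

/-- ∂_z = ½(∂_u − i ∂_v) for maps into complex normed spaces. -/
def dz {F : Type} [NormedAddCommGroup F] [NormedSpace ℂ F]
    (f : ℝ × ℝ → F) (p : ℝ × ℝ) : F :=
  (2 : ℂ)⁻¹ • (pu f p - Complex.I • pv f p)

/-- ∂_z̄ = ½(∂_u + i ∂_v) for maps into complex normed spaces. -/
def dzbar {F : Type} [NormedAddCommGroup F] [NormedSpace ℂ F]
    (f : ℝ × ℝ → F) (p : ℝ × ℝ) : F :=
  (2 : ℂ)⁻¹ • (pu f p + Complex.I • pv f p)

/-- `f_z := ½(f_u − i f_v) ∈ ℂ³` for a real-vector-valued map `f` (in particular `φ_z`). -/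
def phiz (f : ℝ × ℝ → E3) (p : ℝ × ℝ) : Fin 3 → ℂ :=
  (2 : ℂ)⁻¹ • (toC (pu f p) - Complex.I • toC (pv f p))

/-- `f_z̄ := ½(f_u + i f_v) ∈ ℂ³` for a real-vector-valued map `f` (in particular `φ_z̄`). -/
def phizbar (f : ℝ × ℝ → E3) (p : ℝ × ℝ) : Fin 3 → ℂ :=
  (2 : ℂ)⁻¹ • (toC (pu f p) + Complex.I • toC (pv f p))

/-- The unit normal n = (φ_u × φ_v)/‖φ_u × φ_v‖. -/
def nvec (φ : ℝ × ℝ → E3) (p : ℝ × ℝ) : E3 :=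
  ‖cross (pu φ p) (pv φ p)‖⁻¹ • cross (pu φ p) (pv φ p)

/-- Componentwise Laplacian Δ = ∂_uu + ∂_vv. -/
def lap {F : Type} [NormedAddCommGroup F] [NormedSpace ℝ F]
    (f : ℝ × ℝ → F) (p : ℝ × ℝ) : F := pu (pu f) p + pv (pv f) p

/-- Mean curvature H = ⟨Δφ, n⟩/(2λ²). -/
def mcurv (φ : ℝ × ℝ → E3) (lam : ℝ × ℝ → ℝ) (p : ℝ × ℝ) : ℝ :=
  ip (lap φ p) (nvec φ p) / (2 * (lam p) ^ 2)

/-- μ := (∂_z φ_z, n). -/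
def muQ (φ : ℝ × ℝ → E3) (p : ℝ × ℝ) : ℂ :=
  cdot (dz (phiz φ) p) (toC (nvec φ p))

-- Part 1: component lemmas
lemma ip_eq (a b : E3) : ip a b = a 0 * b 0 + a 1 * b 1 + a 2 * b 2 := by
  simp [ip, PiLp.inner_apply, Fin.sum_univ_three, mul_comm]

lemma crossApp (a b : E3) (i : Fin 3) : cross a b i =
    ![a 1 * b 2 - a 2 * b 1, a 2 * b 0 - a 0 * b 2, a 0 * b 1 - a 1 * b 0] i := by
  simp [cross]

lemma cross0 (a b : E3) : cross a b 0 = a 1 * b 2 - a 2 * b 1 := by simp [crossApp]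
lemma cross1 (a b : E3) : cross a b 1 = a 2 * b 0 - a 0 * b 2 := by simp [crossApp]
lemma cross2 (a b : E3) : cross a b 2 = a 0 * b 1 - a 1 * b 0 := by simp [crossApp]

-- triple product / Lagrange identities (pure algebra)
lemma T_cross_left (a b : E3) : ip (cross a b) a = 0 := by
  simp [ip_eq, cross0, cross1, cross2]; ring
lemma T_cross_right (a b : E3) : ip (cross a b) b = 0 := by
  simp [ip_eq, cross0, cross1, cross2]; ring
lemma T_lagrange (a b : E3) : ip (cross a b) (cross a b) = ip a a * ip b b - ip a b ^ 2 := by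
  simp [ip_eq, cross0, cross1, cross2]; ring
lemma T_key (x y w : E3) (i : Fin 3) :
    (ip x x * ip y y - ip x y ^ 2) * w i =
      ip w x * (ip y y * x i - ip x y * y i) + ip w y * (ip x x * y i - ip x y * x i)
        + ip w (cross x y) * cross x y i := by
  fin_cases i <;> · simp [ip_eq, cross0, cross1, cross2]; ring
lemma T_cyc (a b d : E3) : ip (cross a b) d = ip (cross b d) a := by
  simp [ip_eq, cross0, cross1, cross2]; ring
lemma T_lagrange' (a b x y : E3) :
    ip (cross a b) (cross x y) = ip a x * ip b y - ip a y * ip b x := by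
  simp [ip_eq, cross0, cross1, cross2]; ring
lemma ip_comm (a b : E3) : ip a b = ip b a := by simp [ip_eq]; ring
lemma T_swap (a b d : E3) : ip (cross a b) d = -(ip (cross b a) d) := by
  simp [ip_eq, cross0, cross1, cross2]; ring
-- Part 2: calculus toolkit
section calcTools

variable {F : Type} [NormedAddCommGroup F] [NormedSpace ℝ F]

lemma diffAt_of_cdo {U : Set (ℝ × ℝ)} (hU : IsOpen U) {f : ℝ × ℝ → F}
    (hf : ContDiffOn ℝ (⊤ : ℕ∞) f U) {p : ℝ × ℝ} (hp : p ∈ U) : DifferentiableAt ℝ f p :=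
  (hf.differentiableOn (by simp)).differentiableAt (hU.mem_nhds hp)

lemma cdo_fderiv {U : Set (ℝ × ℝ)} (hU : IsOpen U) {f : ℝ × ℝ → F}
    (hf : ContDiffOn ℝ (⊤ : ℕ∞) f U) :
    ContDiffOn ℝ (⊤ : ℕ∞) (fun p => fderiv ℝ f p) U :=
  hf.fderiv_of_isOpen hU (by simp)

lemma cdo_pu {U : Set (ℝ × ℝ)} (hU : IsOpen U) {f : ℝ × ℝ → F}
    (hf : ContDiffOn ℝ (⊤ : ℕ∞) f U) : ContDiffOn ℝ (⊤ : ℕ∞) (pu f) U := by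
  have h1 := cdo_fderiv hU hf
  exact (ContinuousLinearMap.apply ℝ F ((1:ℝ), (0:ℝ))).contDiff.comp_contDiffOn h1

lemma cdo_pv {U : Set (ℝ × ℝ)} (hU : IsOpen U) {f : ℝ × ℝ → F}
    (hf : ContDiffOn ℝ (⊤ : ℕ∞) f U) : ContDiffOn ℝ (⊤ : ℕ∞) (pv f) U := by
  have h1 := cdo_fderiv hU hf
  exact (ContinuousLinearMap.apply ℝ F ((0:ℝ), (1:ℝ))).contDiff.comp_contDiffOn h1

lemma pu_eq_of_hasFDerivAt {f : ℝ × ℝ → F} {L : ℝ × ℝ →L[ℝ] F} {p : ℝ × ℝ}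
    (h : HasFDerivAt f L p) : pu f p = L (1, 0) := by rw [pu, h.fderiv]

lemma pv_eq_of_hasFDerivAt {f : ℝ × ℝ → F} {L : ℝ × ℝ →L[ℝ] F} {p : ℝ × ℝ}
    (h : HasFDerivAt f L p) : pv f p = L (0, 1) := by rw [pv, h.fderiv]

lemma pu_congr {U : Set (ℝ × ℝ)} (hU : IsOpen U) {f g : ℝ × ℝ → F}
    (h : ∀ q ∈ U, f q = g q) {p : ℝ × ℝ} (hp : p ∈ U) : pu f p = pu g p := by
  have : f =ᶠ[nhds p] g := Filter.eventuallyEq_of_mem (hU.mem_nhds hp) h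
  rw [pu, pu, this.fderiv_eq]

lemma pv_congr {U : Set (ℝ × ℝ)} (hU : IsOpen U) {f g : ℝ × ℝ → F}
    (h : ∀ q ∈ U, f q = g q) {p : ℝ × ℝ} (hp : p ∈ U) : pv f p = pv g p := by
  have : f =ᶠ[nhds p] g := Filter.eventuallyEq_of_mem (hU.mem_nhds hp) h
  rw [pv, pv, this.fderiv_eq]

/-- Clairaut on an open set. -/
lemma mixed_symm {U : Set (ℝ × ℝ)} (hU : IsOpen U) {f : ℝ × ℝ → F}
    (hf : ContDiffOn ℝ (⊤ : ℕ∞) f U) {p : ℝ × ℝ} (hp : p ∈ U) :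
    pu (pv f) p = pv (pu f) p := by
  have hev : ∀ᶠ q in nhds p, HasFDerivAt f (fderiv ℝ f q) q :=
    Filter.eventually_of_mem (hU.mem_nhds hp)
      (fun q hq => (diffAt_of_cdo hU hf hq).hasFDerivAt)
  have h2 : HasFDerivAt (fun q => fderiv ℝ f q) (fderiv ℝ (fun q => fderiv ℝ f q) p) p :=
    (diffAt_of_cdo hU (cdo_fderiv hU hf) hp).hasFDerivAt
  have hsymm := second_derivative_symmetric_of_eventually hev h2 ((1:ℝ), (0:ℝ)) ((0:ℝ), (1:ℝ))
  have e1 : pu (pv f) p = fderiv ℝ (fun q => fderiv ℝ f q) p (1, 0) (0, 1) := by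
    have : HasFDerivAt (pv f)
        ((ContinuousLinearMap.apply ℝ F ((0:ℝ), (1:ℝ))).comp
          (fderiv ℝ (fun q => fderiv ℝ f q) p)) p :=
      (ContinuousLinearMap.apply ℝ F ((0:ℝ), (1:ℝ))).hasFDerivAt.comp p h2
    rw [pu_eq_of_hasFDerivAt this]; rfl
  have e2 : pv (pu f) p = fderiv ℝ (fun q => fderiv ℝ f q) p (0, 1) (1, 0) := by
    have : HasFDerivAt (pu f)
        ((ContinuousLinearMap.apply ℝ F ((1:ℝ), (0:ℝ))).comp
          (fderiv ℝ (fun q => fderiv ℝ f q) p)) p :=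
      (ContinuousLinearMap.apply ℝ F ((1:ℝ), (0:ℝ))).hasFDerivAt.comp p h2
    rw [pv_eq_of_hasFDerivAt this]; rfl
  rw [e1, e2, hsymm]

end calcTools

lemma hasFDerivAt_proj {f : ℝ × ℝ → E3} {p : ℝ × ℝ} (h : DifferentiableAt ℝ f p) (i : Fin 3) :
    HasFDerivAt (fun q => f q i)
      ((EuclideanSpace.proj i : E3 →L[ℝ] ℝ).comp (fderiv ℝ f p)) p :=
  (EuclideanSpace.proj (𝕜 := ℝ) i).hasFDerivAt.comp p h.hasFDerivAt

/-- Constancy of a scalar function with vanishing derivative on an open preconnected set. -/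
lemma const_of_deriv_zero {U : Set (ℝ × ℝ)} (hUo : IsOpen U) (hUc : IsPreconnected U)
    {f : ℝ × ℝ → ℝ} (hf : ∀ p ∈ U, HasFDerivAt f (0 : ℝ × ℝ →L[ℝ] ℝ) p) {x y : ℝ × ℝ}
    (hx : x ∈ U) (hy : y ∈ U) : f x = f y := by
  classical
  -- on any ball inside U, f is constant
  have ball_const : ∀ z ∈ U, ∃ ε > 0, Metric.ball z ε ⊆ U ∧
      ∀ w ∈ Metric.ball z ε, f w = f z := by
    intro z hz
    obtain ⟨ε, hε, hb⟩ := Metric.isOpen_iff.1 hUo z hz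
    refine ⟨ε, hε, hb, fun w hw => ?_⟩
    refine (convex_ball z ε).is_const_of_fderivWithin_eq_zero
      (fun q hq => ((hf q (hb hq)).differentiableAt).differentiableWithinAt)
      (fun q hq => ?_) hw (Metric.mem_ball_self hε)
    rw [fderivWithin_of_isOpen Metric.isOpen_ball hq, (hf q (hb hq)).fderiv]
  set u : Set (ℝ × ℝ) := {z | ∃ ε > 0, Metric.ball z ε ⊆ U ∧
      ∀ w ∈ Metric.ball z ε, f w = f x} with hu_def
  set v : Set (ℝ × ℝ) := {z | ∃ ε > 0, Metric.ball z ε ⊆ U ∧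
      ∀ w ∈ Metric.ball z ε, f w ≠ f x} with hv_def
  have huo : IsOpen u := by
    refine Metric.isOpen_iff.2 fun z hz => ?_
    obtain ⟨ε, hε, hb, hc⟩ := hz
    refine ⟨ε, hε, fun z' hz' => ?_⟩
    refine ⟨ε - dist z' z, by simpa [Metric.mem_ball] using hz', ?_, fun w hw => ?_⟩
    · exact fun w hw => hb (Metric.mem_ball.2 (by
        have := Metric.mem_ball.1 hw
        have h2 := (dist_triangle w z' z)
        linarith))
    · exact hc w (Metric.mem_ball.2 (by
        have := Metric.mem_ball.1 hw
        have h2 := (dist_triangle w z' z)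
        linarith))
  have hvo : IsOpen v := by
    refine Metric.isOpen_iff.2 fun z hz => ?_
    obtain ⟨ε, hε, hb, hc⟩ := hz
    refine ⟨ε, hε, fun z' hz' => ?_⟩
    refine ⟨ε - dist z' z, by simpa [Metric.mem_ball] using hz', ?_, fun w hw => ?_⟩
    · exact fun w hw => hb (Metric.mem_ball.2 (by
        have := Metric.mem_ball.1 hw
        have h2 := (dist_triangle w z' z)
        linarith))
    · exact hc w (Metric.mem_ball.2 (by
        have := Metric.mem_ball.1 hw
        have h2 := (dist_triangle w z' z)
        linarith))
  have hcover : U ⊆ u ∪ v := by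
    intro z hz
    obtain ⟨ε, hε, hb, hc⟩ := ball_const z hz
    by_cases h : f z = f x
    · exact Or.inl ⟨ε, hε, hb, fun w hw => (hc w hw).trans h⟩
    · exact Or.inr ⟨ε, hε, hb, fun w hw => (hc w hw).symm ▸ h⟩
  have hxu : x ∈ u := by
    obtain ⟨ε, hε, hb, hc⟩ := ball_const x hx
    exact ⟨ε, hε, hb, hc⟩
  have hv_empty : ∀ z ∈ U, z ∉ v := by
    intro z hzU hzv
    have hne : (U ∩ (u ∩ v)).Nonempty := by
      refine hUc u v huo hvo hcover ⟨x, hx, hxu⟩ ⟨z, hzU, hzv⟩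
    obtain ⟨w, _, ⟨ε₁, hε₁, _, hc₁⟩, ⟨ε₂, hε₂, _, hc₂⟩⟩ := hne
    exact hc₂ w (Metric.mem_ball_self hε₂) (hc₁ w (Metric.mem_ball_self hε₁))
  have : y ∈ u := (hcover hy).resolve_right (hv_empty y hy)
  obtain ⟨ε, hε, _, hc⟩ := this
  exact (hc y (Metric.mem_ball_self hε)).symm
lemma clm_zero_of_basis {L : ℝ × ℝ →L[ℝ] ℝ} (h1 : L (1, 0) = 0) (h2 : L (0, 1) = 0) :
    L = 0 := by
  refine ContinuousLinearMap.ext fun z => ?_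
  have hz : (z : ℝ × ℝ) = z.1 • ((1:ℝ), (0:ℝ)) + z.2 • ((0:ℝ), (1:ℝ)) := by
    simp [Prod.ext_iff]
  rw [hz, map_add, map_smul, map_smul, h1, h2]
  simp

lemma pu_const_mul {p : ℝ × ℝ} (c : ℝ) {f : ℝ × ℝ → ℝ} (hf : DifferentiableAt ℝ f p) :
    pu (fun q => c * f q) p = c * pu f p := by
  rw [pu, fderiv_const_mul hf c]; simp [pu]

lemma pv_const_mul {p : ℝ × ℝ} (c : ℝ) {f : ℝ × ℝ → ℝ} (hf : DifferentiableAt ℝ f p) :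
    pv (fun q => c * f q) p = c * pv f p := by
  rw [pv, fderiv_const_mul hf c]; simp [pv]
-- Part 3: pointwise derivative rules for pu, pv
section puRules

variable {p : ℝ × ℝ}

lemma pu_mul {f g : ℝ × ℝ → ℝ} (hf : DifferentiableAt ℝ f p) (hg : DifferentiableAt ℝ g p) :
    pu (fun q => f q * g q) p = pu f p * g p + f p * pu g p := by
  rw [pu, fderiv_fun_mul hf hg]; simp [pu]; ring

lemma pv_mul {f g : ℝ × ℝ → ℝ} (hf : DifferentiableAt ℝ f p) (hg : DifferentiableAt ℝ g p) :
    pv (fun q => f q * g q) p = pv f p * g p + f p * pv g p := by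
  rw [pv, fderiv_fun_mul hf hg]; simp [pv]; ring

lemma pu_add {f g : ℝ × ℝ → ℝ} (hf : DifferentiableAt ℝ f p) (hg : DifferentiableAt ℝ g p) :
    pu (fun q => f q + g q) p = pu f p + pu g p := by
  rw [pu, fderiv_fun_add hf hg]; simp [pu]

lemma pv_add {f g : ℝ × ℝ → ℝ} (hf : DifferentiableAt ℝ f p) (hg : DifferentiableAt ℝ g p) :
    pv (fun q => f q + g q) p = pv f p + pv g p := by
  rw [pv, fderiv_fun_add hf hg]; simp [pv]

lemma pu_sub {f g : ℝ × ℝ → ℝ} (hf : DifferentiableAt ℝ f p) (hg : DifferentiableAt ℝ g p) :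
    pu (fun q => f q - g q) p = pu f p - pu g p := by
  rw [pu, fderiv_fun_sub hf hg]; simp [pu]

lemma pv_sub {f g : ℝ × ℝ → ℝ} (hf : DifferentiableAt ℝ f p) (hg : DifferentiableAt ℝ g p) :
    pv (fun q => f q - g q) p = pv f p - pv g p := by
  rw [pv, fderiv_fun_sub hf hg]; simp [pv]

lemma pu_inv {f : ℝ × ℝ → ℝ} (hf : DifferentiableAt ℝ f p) (h0 : f p ≠ 0) :
    pu (fun q => (f q)⁻¹) p = -(f p ^ 2)⁻¹ * pu f p := by
  have h := (hasDerivAt_inv h0).hasFDerivAt.comp p hf.hasFDerivAt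
  rw [show (fun q => (f q)⁻¹) = (fun y => y⁻¹) ∘ f from rfl, pu_eq_of_hasFDerivAt h]
  simp [pu]; ring

lemma pv_inv {f : ℝ × ℝ → ℝ} (hf : DifferentiableAt ℝ f p) (h0 : f p ≠ 0) :
    pv (fun q => (f q)⁻¹) p = -(f p ^ 2)⁻¹ * pv f p := by
  have h := (hasDerivAt_inv h0).hasFDerivAt.comp p hf.hasFDerivAt
  rw [show (fun q => (f q)⁻¹) = (fun y => y⁻¹) ∘ f from rfl, pv_eq_of_hasFDerivAt h]
  simp [pv]; ring

lemma pu_proj {f : ℝ × ℝ → E3} (hf : DifferentiableAt ℝ f p) (i : Fin 3) :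
    pu (fun q => f q i) p = pu f p i := by
  rw [pu_eq_of_hasFDerivAt (hasFDerivAt_proj hf i)]; simp [pu]

lemma pv_proj {f : ℝ × ℝ → E3} (hf : DifferentiableAt ℝ f p) (i : Fin 3) :
    pv (fun q => f q i) p = pv f p i := by
  rw [pv_eq_of_hasFDerivAt (hasFDerivAt_proj hf i)]; simp [pv]

lemma pu_sq {f : ℝ × ℝ → ℝ} (hf : DifferentiableAt ℝ f p) :
    pu (fun q => f q ^ 2) p = 2 * f p * pu f p := by
  have : (fun q => f q ^ 2) = fun q => f q * f q := by funext q; ring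
  rw [this, pu_mul hf hf]; ring

lemma pv_sq {f : ℝ × ℝ → ℝ} (hf : DifferentiableAt ℝ f p) :
    pv (fun q => f q ^ 2) p = 2 * f p * pv f p := by
  have : (fun q => f q ^ 2) = fun q => f q * f q := by funext q; ring
  rw [this, pv_mul hf hf]; ring

lemma pu_ip {f g : ℝ × ℝ → E3} (hf : DifferentiableAt ℝ f p) (hg : DifferentiableAt ℝ g p) :
    pu (fun q => ip (f q) (g q)) p = ip (pu f p) (g p) + ip (f p) (pu g p) := by
  have := fderiv_inner_apply (𝕜 := ℝ) hf hg ((1:ℝ), (0:ℝ))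
  rw [pu, show (fun q => ip (f q) (g q)) = (fun q => @inner ℝ _ _ (f q) (g q)) from rfl, this]
  simp [ip, pu, real_inner_comm]; ring

lemma pv_ip {f g : ℝ × ℝ → E3} (hf : DifferentiableAt ℝ f p) (hg : DifferentiableAt ℝ g p) :
    pv (fun q => ip (f q) (g q)) p = ip (pv f p) (g p) + ip (f p) (pv g p) := by
  have := fderiv_inner_apply (𝕜 := ℝ) hf hg ((0:ℝ), (1:ℝ))
  rw [pv, show (fun q => ip (f q) (g q)) = (fun q => @inner ℝ _ _ (f q) (g q)) from rfl, this]
  simp [ip, pv, real_inner_comm]; ring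

end puRules
-- Part 4: frame geometry of a conformal immersion
lemma ip_add_left (a b c : E3) : ip (a + b) c = ip a c + ip b c := by
  simp [ip_eq, PiLp.add_apply]; ring

lemma expand_of_ips {x y w : E3} {L a b c : ℝ} (hL : L ≠ 0)
    (hxx : ip x x = L ^ 2) (hyy : ip y y = L ^ 2) (hxy : ip x y = 0)
    (ha : ip w x = a) (hb : ip w y = b) (hc : ip w (cross x y) = c) (i : Fin 3) :
    w i = (a / L ^ 2) * x i + (b / L ^ 2) * y i + (c / L ^ 4) * cross x y i := by
  have hk := T_key x y w i
  rw [hxx, hyy, hxy, ha, hb, hc] at hk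
  field_simp
  linear_combination hk

section Frame

variable {U : Set (ℝ × ℝ)} {φ : ℝ × ℝ → E3} {lam : ℝ × ℝ → ℝ} {p : ℝ × ℝ}

lemma frame_ips (hφ : IsConfImm U φ lam) (hp : p ∈ U) :
    pu (pv φ) p = pv (pu φ) p ∧
    ip (pu (pu φ) p) (pu φ p) = lam p * pu lam p ∧
    ip (pu (pu φ) p) (pv φ p) = -(lam p * pv lam p) ∧
    ip (pu (pv φ) p) (pu φ p) = lam p * pv lam p ∧
    ip (pu (pv φ) p) (pv φ p) = lam p * pu lam p ∧
    ip (pv (pv φ) p) (pu φ p) = -(lam p * pu lam p) ∧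
    ip (pv (pv φ) p) (pv φ p) = lam p * pv lam p := by
  obtain ⟨hUo, hsm, hlam, hconf⟩ := hφ
  have hsy : pu (pv φ) p = pv (pu φ) p := mixed_symm hUo hsm hp
  have hdu : DifferentiableAt ℝ (pu φ) p := diffAt_of_cdo hUo (cdo_pu hUo hsm) hp
  have hdv : DifferentiableAt ℝ (pv φ) p := diffAt_of_cdo hUo (cdo_pv hUo hsm) hp
  have hdl : DifferentiableAt ℝ lam p := diffAt_of_cdo hUo hlam hp
  -- d/du <phi_u, phi_u> = d/du lam^2
  have e1 : ip (pu (pu φ) p) (pu φ p) + ip (pu φ p) (pu (pu φ) p) = 2 * lam p * pu lam p := by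
    rw [← pu_ip hdu hdu, ← pu_sq hdl]
    exact pu_congr hUo (fun q hq => (hconf q hq).2.1) hp
  -- d/dv <phi_u, phi_u> = d/dv lam^2
  have e2 : ip (pv (pu φ) p) (pu φ p) + ip (pu φ p) (pv (pu φ) p) = 2 * lam p * pv lam p := by
    rw [← pv_ip hdu hdu, ← pv_sq hdl]
    exact pv_congr hUo (fun q hq => (hconf q hq).2.1) hp
  -- d/du <phi_v, phi_v> = d/du lam^2
  have e3 : ip (pu (pv φ) p) (pv φ p) + ip (pv φ p) (pu (pv φ) p) = 2 * lam p * pu lam p := by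
    rw [← pu_ip hdv hdv, ← pu_sq hdl]
    exact pu_congr hUo (fun q hq => (hconf q hq).2.2.1) hp
  -- d/dv <phi_v, phi_v> = d/dv lam^2
  have e4 : ip (pv (pv φ) p) (pv φ p) + ip (pv φ p) (pv (pv φ) p) = 2 * lam p * pv lam p := by
    rw [← pv_ip hdv hdv, ← pv_sq hdl]
    exact pv_congr hUo (fun q hq => (hconf q hq).2.2.1) hp
  -- d/du <phi_u, phi_v> = 0
  have e5 : ip (pu (pu φ) p) (pv φ p) + ip (pu φ p) (pu (pv φ) p) = 0 := by
    rw [← pu_ip hdu hdv]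
    have h0 : pu (fun _ : ℝ × ℝ => (0:ℝ)) p = 0 := by
      rw [pu, fderiv_fun_const]; simp
    rw [pu_congr hUo (fun q hq => (hconf q hq).2.2.2) hp, h0]
  -- d/dv <phi_u, phi_v> = 0
  have e6 : ip (pv (pu φ) p) (pv φ p) + ip (pu φ p) (pv (pv φ) p) = 0 := by
    rw [← pv_ip hdu hdv]
    have h0 : pv (fun _ : ℝ × ℝ => (0:ℝ)) p = 0 := by
      rw [pv, fderiv_fun_const]; simp
    rw [pv_congr hUo (fun q hq => (hconf q hq).2.2.2) hp, h0]
  rw [ip_comm (pu φ p) (pu (pu φ) p)] at e1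
  rw [ip_comm (pu φ p) (pv (pu φ) p)] at e2
  rw [ip_comm (pv φ p) (pu (pv φ) p)] at e3
  rw [ip_comm (pv φ p) (pv (pv φ) p)] at e4
  rw [ip_comm (pu φ p) (pu (pv φ) p)] at e5
  rw [ip_comm (pu φ p) (pv (pv φ) p)] at e6
  rw [hsy] at *
  refine ⟨hsy, by linarith, by linarith, by linarith, by linarith, by linarith, by linarith⟩

/-- Second fundamental form coefficients (times `lam p ^ 2`). -/
def Pe (φ : ℝ × ℝ → E3) (p : ℝ × ℝ) : ℝ :=
  ip (pu (pu φ) p) (cross (pu φ p) (pv φ p))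
def Pf (φ : ℝ × ℝ → E3) (p : ℝ × ℝ) : ℝ :=
  ip (pu (pv φ) p) (cross (pu φ p) (pv φ p))
def Pg (φ : ℝ × ℝ → E3) (p : ℝ × ℝ) : ℝ :=
  ip (pv (pv φ) p) (cross (pu φ p) (pv φ p))

lemma frame_exp (hφ : IsConfImm U φ lam) (hp : p ∈ U) (i : Fin 3) :
    pu (pu φ) p i = ((lam p * pu lam p) / lam p ^ 2) * pu φ p i
        + (-(lam p * pv lam p) / lam p ^ 2) * pv φ p i
        + (Pe φ p / lam p ^ 4) * cross (pu φ p) (pv φ p) i ∧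
    pu (pv φ) p i = ((lam p * pv lam p) / lam p ^ 2) * pu φ p i
        + ((lam p * pu lam p) / lam p ^ 2) * pv φ p i
        + (Pf φ p / lam p ^ 4) * cross (pu φ p) (pv φ p) i ∧
    pv (pv φ) p i = ((-(lam p * pu lam p)) / lam p ^ 2) * pu φ p i
        + ((lam p * pv lam p) / lam p ^ 2) * pv φ p i
        + (Pg φ p / lam p ^ 4) * cross (pu φ p) (pv φ p) i := by
  obtain ⟨hsy, e1, e2, e3, e4, e5, e6⟩ := frame_ips hφ hp
  obtain ⟨hL, hxx, hyy, hxy⟩ := hφ.2.2.2 p hp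
  have hL0 : lam p ≠ 0 := ne_of_gt hL
  exact ⟨expand_of_ips hL0 hxx hyy hxy e1 e2 rfl i,
    expand_of_ips hL0 hxx hyy hxy e3 e4 rfl i,
    expand_of_ips hL0 hxx hyy hxy e5 e6 rfl i⟩

/-- Weingarten-type expansion for the u-derivative of the cross product vector. -/
lemma wein_u (hφ : IsConfImm U φ lam) (hp : p ∈ U) (i : Fin 3) :
    (cross (pu (pu φ) p) (pv φ p) + cross (pu φ p) (pu (pv φ) p)) i =
      ((-(Pe φ p)) / lam p ^ 2) * pu φ p i + ((-(Pf φ p)) / lam p ^ 2) * pv φ p i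
        + ((2 * lam p ^ 3 * pu lam p) / lam p ^ 4) * cross (pu φ p) (pv φ p) i := by
  obtain ⟨hsy, e1, e2, e3, e4, e5, e6⟩ := frame_ips hφ hp
  obtain ⟨hL, hxx, hyy, hxy⟩ := hφ.2.2.2 p hp
  have hL0 : lam p ≠ 0 := ne_of_gt hL
  set x := pu φ p
  set y := pv φ p
  set w1 := pu (pu φ) p
  set w2 := pu (pv φ) p
  refine expand_of_ips hL0 hxx hyy hxy ?_ ?_ ?_ i
  · rw [ip_add_left, T_cyc w1 y x, T_swap y x w1, ip_comm _ w1,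
      T_cyc x w2 x, T_cross_right]
    simp [Pe]; rfl
  · rw [ip_add_left, T_cross_right, T_cyc x w2 y, T_cyc w2 y x, T_swap y x w2, ip_comm _ w2]
    simp [Pf]; rfl
  · rw [ip_add_left, T_lagrange', T_lagrange', hyy, hxx, e1, e2, e4, hxy,
      ip_comm y x, hxy]
    ring

/-- Weingarten-type expansion for the v-derivative of the cross product vector. -/
lemma wein_v (hφ : IsConfImm U φ lam) (hp : p ∈ U) (i : Fin 3) :
    (cross (pu (pv φ) p) (pv φ p) + cross (pu φ p) (pv (pv φ) p)) i =
      ((-(Pf φ p)) / lam p ^ 2) * pu φ p i + ((-(Pg φ p)) / lam p ^ 2) * pv φ p i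
        + ((2 * lam p ^ 3 * pv lam p) / lam p ^ 4) * cross (pu φ p) (pv φ p) i := by
  obtain ⟨hsy, e1, e2, e3, e4, e5, e6⟩ := frame_ips hφ hp
  obtain ⟨hL, hxx, hyy, hxy⟩ := hφ.2.2.2 p hp
  have hL0 : lam p ≠ 0 := ne_of_gt hL
  set x := pu φ p
  set y := pv φ p
  set w2 := pu (pv φ) p
  set w3 := pv (pv φ) p
  refine expand_of_ips hL0 hxx hyy hxy ?_ ?_ ?_ i
  · rw [ip_add_left, T_cyc w2 y x, T_swap y x w2, ip_comm _ w2,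
      T_cyc x w3 x, T_cross_right]
    simp [Pf]; rfl
  · rw [ip_add_left, T_cross_right, T_cyc x w3 y, T_cyc w3 y x, T_swap y x w3, ip_comm _ w3]
    simp [Pg]; rfl
  · rw [ip_add_left, T_lagrange', T_lagrange', hyy, hxx, e3, e4, e6, hxy,
      ip_comm y x, hxy]
    ring

lemma cross_ip_self (hφ : IsConfImm U φ lam) (hp : p ∈ U) :
    ip (cross (pu φ p) (pv φ p)) (cross (pu φ p) (pv φ p)) = lam p ^ 4 := by
  obtain ⟨hL, hxx, hyy, hxy⟩ := hφ.2.2.2 p hp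
  rw [T_lagrange, hxx, hyy, hxy]; ring

lemma norm_cross (hφ : IsConfImm U φ lam) (hp : p ∈ U) :
    ‖cross (pu φ p) (pv φ p)‖ = lam p ^ 2 := by
  have h := cross_ip_self hφ hp
  have hL := (hφ.2.2.2 p hp).1
  have h2 : ‖cross (pu φ p) (pv φ p)‖ ^ 2 = (lam p ^ 2) ^ 2 := by
    rw [← real_inner_self_eq_norm_sq]
    rw [show @inner ℝ _ _ (cross (pu φ p) (pv φ p)) (cross (pu φ p) (pv φ p))
      = ip (cross (pu φ p) (pv φ p)) (cross (pu φ p) (pv φ p)) from rfl, h]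
    ring
  exact (pow_left_inj₀ (norm_nonneg _) (by positivity) two_ne_zero).1 h2

lemma nvec_val (hφ : IsConfImm U φ lam) (hp : p ∈ U) :
    nvec φ p = (lam p ^ 2)⁻¹ • cross (pu φ p) (pv φ p) := by
  rw [nvec, norm_cross hφ hp]

end Frame
-- Part 5: values of mcurv and muQ
lemma ip_smul_right (c : ℝ) (a b : E3) : ip a (c • b) = c * ip a b := by
  simp [ip_eq, PiLp.smul_apply]; ring

def toCL : E3 →L[ℝ] (Fin 3 → ℂ) :=
  ContinuousLinearMap.pi (fun j => Complex.ofRealCLM.comp (EuclideanSpace.proj j))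

lemma toCL_apply (x : E3) : toCL x = toC x := by
  funext j; simp [toCL, toC]

section Vals

variable {U : Set (ℝ × ℝ)} {φ : ℝ × ℝ → E3} {lam : ℝ × ℝ → ℝ} {p : ℝ × ℝ}

lemma mcurv_val (hφ : IsConfImm U φ lam) (hp : p ∈ U) :
    mcurv φ lam p = ((lam p ^ 2)⁻¹ * (Pe φ p + Pg φ p)) / (2 * lam p ^ 2) := by
  rw [mcurv, nvec_val hφ hp, lap, ip_smul_right, ip_add_left, Pe, Pg]

lemma phiz_pu (hφ : IsConfImm U φ lam) (hp : p ∈ U) :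
    pu (phiz φ) p = (2 : ℂ)⁻¹ •
      (toC (pu (pu φ) p) - Complex.I • toC (pu (pv φ) p)) := by
  obtain ⟨hUo, hsm, -, -⟩ := hφ
  have hdu : DifferentiableAt ℝ (pu φ) p := diffAt_of_cdo hUo (cdo_pu hUo hsm) hp
  have hdv : DifferentiableAt ℝ (pv φ) p := diffAt_of_cdo hUo (cdo_pv hUo hsm) hp
  have hfun : phiz φ = fun q => (2 : ℂ)⁻¹ • (toCL (pu φ q) - Complex.I • toCL (pv φ q)) := by
    funext q; simp [phiz, toCL_apply]
  have H := (((toCL.hasFDerivAt.comp p hdu.hasFDerivAt).sub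
      ((toCL.hasFDerivAt.comp p hdv.hasFDerivAt).const_smul Complex.I)).const_smul
        ((2:ℂ)⁻¹))
  have H' : HasFDerivAt (fun q => (2 : ℂ)⁻¹ • (toCL (pu φ q) - Complex.I • toCL (pv φ q)))
      ((2:ℂ)⁻¹ • (toCL.comp (fderiv ℝ (pu φ) p) - Complex.I • toCL.comp (fderiv ℝ (pv φ) p))) p := H
  rw [hfun, pu_eq_of_hasFDerivAt H']
  simp [toCL_apply, pu]

lemma phiz_pv (hφ : IsConfImm U φ lam) (hp : p ∈ U) :
    pv (phiz φ) p = (2 : ℂ)⁻¹ •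
      (toC (pv (pu φ) p) - Complex.I • toC (pv (pv φ) p)) := by
  obtain ⟨hUo, hsm, -, -⟩ := hφ
  have hdu : DifferentiableAt ℝ (pu φ) p := diffAt_of_cdo hUo (cdo_pu hUo hsm) hp
  have hdv : DifferentiableAt ℝ (pv φ) p := diffAt_of_cdo hUo (cdo_pv hUo hsm) hp
  have hfun : phiz φ = fun q => (2 : ℂ)⁻¹ • (toCL (pu φ q) - Complex.I • toCL (pv φ q)) := by
    funext q; simp [phiz, toCL_apply]
  have H := (((toCL.hasFDerivAt.comp p hdu.hasFDerivAt).sub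
      ((toCL.hasFDerivAt.comp p hdv.hasFDerivAt).const_smul Complex.I)).const_smul
        ((2:ℂ)⁻¹))
  have H' : HasFDerivAt (fun q => (2 : ℂ)⁻¹ • (toCL (pu φ q) - Complex.I • toCL (pv φ q)))
      ((2:ℂ)⁻¹ • (toCL.comp (fderiv ℝ (pu φ) p) - Complex.I • toCL.comp (fderiv ℝ (pv φ) p))) p := H
  rw [hfun, pv_eq_of_hasFDerivAt H']
  simp [toCL_apply, pv]

lemma muQ_val (hφ : IsConfImm U φ lam) (hp : p ∈ U) :
    muQ φ p = (((lam p ^ 2)⁻¹ * (Pe φ p - Pg φ p) / 4 : ℝ) : ℂ)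
      - (((lam p ^ 2)⁻¹ * Pf φ p / 2 : ℝ) : ℂ) * Complex.I := by
  have hsy : pu (pv φ) p = pv (pu φ) p := mixed_symm hφ.1 hφ.2.1 hp
  rw [muQ, dz, phiz_pu hφ hp, phiz_pv hφ hp, nvec_val hφ hp, ← hsy]
  rw [cdot, Fin.sum_univ_three]
  simp only [Pi.smul_apply, Pi.sub_apply, toC, PiLp.smul_apply, smul_eq_mul,
    Complex.real_smul, Complex.ofReal_mul, Complex.ofReal_inv, Complex.ofReal_pow]
  rw [Pe, Pf, Pg, ip_eq, ip_eq, ip_eq]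
  push_cast
  ring_nf
  simp only [Complex.I_sq]
  ring

end Vals
-- Part 6: derivatives of cross components
lemma crossCyc (a b : E3) (i : Fin 3) :
    cross a b i = a (i + 1) * b (i + 2) - a (i + 2) * b (i + 1) := by
  fin_cases i <;> simp [cross0, cross1, cross2] <;> rfl

section CrossDeriv

variable {U : Set (ℝ × ℝ)} {φ : ℝ × ℝ → E3} {p : ℝ × ℝ}

lemma crossfun_eq (φ : ℝ × ℝ → E3) (i : Fin 3) :
    (fun q => cross (pu φ q) (pv φ q) i) =
      fun q => pu φ q (i + 1) * pv φ q (i + 2) - pu φ q (i + 2) * pv φ q (i + 1) := by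
  funext q; rw [crossCyc]

lemma cross_diffAt (hUo : IsOpen U) (hsm : ContDiffOn ℝ (⊤ : ℕ∞) φ U) (hp : p ∈ U) (i : Fin 3) :
    DifferentiableAt ℝ (fun q => cross (pu φ q) (pv φ q) i) p := by
  have hdu : DifferentiableAt ℝ (pu φ) p := diffAt_of_cdo hUo (cdo_pu hUo hsm) hp
  have hdv : DifferentiableAt ℝ (pv φ) p := diffAt_of_cdo hUo (cdo_pv hUo hsm) hp
  rw [crossfun_eq]
  exact (((hasFDerivAt_proj hdu (i+1)).differentiableAt.mul
    (hasFDerivAt_proj hdv (i+2)).differentiableAt).sub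
    ((hasFDerivAt_proj hdu (i+2)).differentiableAt.mul
      (hasFDerivAt_proj hdv (i+1)).differentiableAt))

lemma pu_crossfun (hUo : IsOpen U) (hsm : ContDiffOn ℝ (⊤ : ℕ∞) φ U) (hp : p ∈ U) (i : Fin 3) :
    pu (fun q => cross (pu φ q) (pv φ q) i) p =
      (cross (pu (pu φ) p) (pv φ p) + cross (pu φ p) (pu (pv φ) p)) i := by
  have hdu : DifferentiableAt ℝ (pu φ) p := diffAt_of_cdo hUo (cdo_pu hUo hsm) hp
  have hdv : DifferentiableAt ℝ (pv φ) p := diffAt_of_cdo hUo (cdo_pv hUo hsm) hp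
  have d1 : ∀ j, DifferentiableAt ℝ (fun q => pu φ q j) p :=
    fun j => (hasFDerivAt_proj hdu j).differentiableAt
  have d2 : ∀ j, DifferentiableAt ℝ (fun q => pv φ q j) p :=
    fun j => (hasFDerivAt_proj hdv j).differentiableAt
  rw [crossfun_eq, pu_sub ((d1 _).fun_mul (d2 _)) ((d1 _).fun_mul (d2 _)),
    pu_mul (d1 _) (d2 _), pu_mul (d1 _) (d2 _),
    pu_proj hdu, pu_proj hdu, pu_proj hdv, pu_proj hdv,
    PiLp.add_apply, crossCyc, crossCyc]
  ring

lemma pv_crossfun (hUo : IsOpen U) (hsm : ContDiffOn ℝ (⊤ : ℕ∞) φ U) (hp : p ∈ U) (i : Fin 3) :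
    pv (fun q => cross (pu φ q) (pv φ q) i) p =
      (cross (pv (pu φ) p) (pv φ p) + cross (pu φ p) (pv (pv φ) p)) i := by
  have hdu : DifferentiableAt ℝ (pu φ) p := diffAt_of_cdo hUo (cdo_pu hUo hsm) hp
  have hdv : DifferentiableAt ℝ (pv φ) p := diffAt_of_cdo hUo (cdo_pv hUo hsm) hp
  have d1 : ∀ j, DifferentiableAt ℝ (fun q => pu φ q j) p :=
    fun j => (hasFDerivAt_proj hdu j).differentiableAt
  have d2 : ∀ j, DifferentiableAt ℝ (fun q => pv φ q j) p :=
    fun j => (hasFDerivAt_proj hdv j).differentiableAt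
  rw [crossfun_eq, pv_sub ((d1 _).fun_mul (d2 _)) ((d1 _).fun_mul (d2 _)),
    pv_mul (d1 _) (d2 _), pv_mul (d1 _) (d2 _),
    pv_proj hdu, pv_proj hdu, pv_proj hdv, pv_proj hdv,
    PiLp.add_apply, crossCyc, crossCyc]
  ring

end CrossDeriv
-- Part 7: the transition matrix function and its constancy
section MMat

variable {U : Set (ℝ × ℝ)} {φ ψ : ℝ × ℝ → E3} {lam : ℝ × ℝ → ℝ} {p : ℝ × ℝ}

lemma m_diffAt (hφ : IsConfImm U φ lam) (hψ : IsConfImm U ψ lam) (hp : p ∈ U) (i j : Fin 3) :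
    DifferentiableAt ℝ (fun q => (lam q ^ 2)⁻¹ * (pu ψ q i * pu φ q j + pv ψ q i * pv φ q j)
      + ((lam q ^ 2)⁻¹ * (lam q ^ 2)⁻¹)
        * (cross (pu ψ q) (pv ψ q) i * cross (pu φ q) (pv φ q) j)) p := by
  obtain ⟨hUo, hφs, hlams, hφc⟩ := hφ
  have hψs := hψ.2.1
  have hL : 0 < lam p := (hφc p hp).1
  have hL2 : lam p ^ 2 ≠ 0 := pow_ne_zero 2 (ne_of_gt hL)
  have hdl : DifferentiableAt ℝ lam p := diffAt_of_cdo hUo hlams hp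
  have hdinv : DifferentiableAt ℝ (fun q => (lam q ^ 2)⁻¹) p := (hdl.pow 2).inv hL2
  have hdφu := diffAt_of_cdo hUo (cdo_pu hUo hφs) hp
  have hdφv := diffAt_of_cdo hUo (cdo_pv hUo hφs) hp
  have hdψu := diffAt_of_cdo hUo (cdo_pu hUo hψs) hp
  have hdψv := diffAt_of_cdo hUo (cdo_pv hUo hψs) hp
  exact (hdinv.mul (((hasFDerivAt_proj hdψu i).differentiableAt.mul
      (hasFDerivAt_proj hdφu j).differentiableAt).add
      ((hasFDerivAt_proj hdψv i).differentiableAt.mul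
        (hasFDerivAt_proj hdφv j).differentiableAt))).add
    ((hdinv.mul hdinv).mul ((cross_diffAt hUo hψs hp i).mul (cross_diffAt hUo hφs hp j)))

lemma m_pu_zero (hφ : IsConfImm U φ lam) (hψ : IsConfImm U ψ lam) (hp : p ∈ U)
    (hPe : Pe ψ p = Pe φ p) (hPf : Pf ψ p = Pf φ p) (hPg : Pg ψ p = Pg φ p) (i j : Fin 3) :
    pu (fun q => (lam q ^ 2)⁻¹ * (pu ψ q i * pu φ q j + pv ψ q i * pv φ q j)
      + ((lam q ^ 2)⁻¹ * (lam q ^ 2)⁻¹)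
        * (cross (pu ψ q) (pv ψ q) i * cross (pu φ q) (pv φ q) j)) p = 0 := by
  have hUo := hφ.1
  have hφs := hφ.2.1
  have hψs := hψ.2.1
  have hlams := hφ.2.2.1
  have hL : 0 < lam p := (hφ.2.2.2 p hp).1
  have hL0 : lam p ≠ 0 := ne_of_gt hL
  have hL2 : lam p ^ 2 ≠ 0 := pow_ne_zero 2 hL0
  have hdl : DifferentiableAt ℝ lam p := diffAt_of_cdo hUo hlams hp
  have hdl2 : DifferentiableAt ℝ (fun q => lam q ^ 2) p := hdl.pow 2
  have hdinv : DifferentiableAt ℝ (fun q => (lam q ^ 2)⁻¹) p := hdl2.inv hL2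
  have hdφu := diffAt_of_cdo hUo (cdo_pu hUo hφs) hp
  have hdφv := diffAt_of_cdo hUo (cdo_pv hUo hφs) hp
  have hdψu := diffAt_of_cdo hUo (cdo_pu hUo hψs) hp
  have hdψv := diffAt_of_cdo hUo (cdo_pv hUo hψs) hp
  have hXu : DifferentiableAt ℝ (fun q => pu ψ q i) p :=
    (hasFDerivAt_proj hdψu i).differentiableAt
  have hXv : DifferentiableAt ℝ (fun q => pv ψ q i) p :=
    (hasFDerivAt_proj hdψv i).differentiableAt
  have hYu : DifferentiableAt ℝ (fun q => pu φ q j) p :=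
    (hasFDerivAt_proj hdφu j).differentiableAt
  have hYv : DifferentiableAt ℝ (fun q => pv φ q j) p :=
    (hasFDerivAt_proj hdφv j).differentiableAt
  have hcψ : DifferentiableAt ℝ (fun q => cross (pu ψ q) (pv ψ q) i) p :=
    cross_diffAt hUo hψs hp i
  have hcφ : DifferentiableAt ℝ (fun q => cross (pu φ q) (pv φ q) j) p :=
    cross_diffAt hUo hφs hp j
  rw [pu_add (hdinv.fun_mul ((hXu.fun_mul hYu).fun_add (hXv.fun_mul hYv)))
      ((hdinv.fun_mul hdinv).fun_mul (hcψ.fun_mul hcφ)),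
    pu_mul hdinv ((hXu.fun_mul hYu).fun_add (hXv.fun_mul hYv)),
    pu_mul (hdinv.fun_mul hdinv) (hcψ.fun_mul hcφ),
    pu_mul hdinv hdinv,
    pu_inv hdl2 hL2, pu_sq hdl,
    pu_add (hXu.fun_mul hYu) (hXv.fun_mul hYv),
    pu_mul hXu hYu, pu_mul hXv hYv,
    pu_mul hcψ hcφ,
    pu_proj hdψu i, pu_proj hdψv i, pu_proj hdφu j, pu_proj hdφv j,
    pu_crossfun hUo hψs hp i, pu_crossfun hUo hφs hp j,
    wein_u hψ hp i, wein_u hφ hp j,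
    (frame_exp hψ hp i).1, (frame_exp hψ hp i).2.1,
    (frame_exp hφ hp j).1, (frame_exp hφ hp j).2.1,
    hPe, hPf]
  field_simp
  ring

lemma m_pv_zero (hφ : IsConfImm U φ lam) (hψ : IsConfImm U ψ lam) (hp : p ∈ U)
    (hPe : Pe ψ p = Pe φ p) (hPf : Pf ψ p = Pf φ p) (hPg : Pg ψ p = Pg φ p) (i j : Fin 3) :
    pv (fun q => (lam q ^ 2)⁻¹ * (pu ψ q i * pu φ q j + pv ψ q i * pv φ q j)
      + ((lam q ^ 2)⁻¹ * (lam q ^ 2)⁻¹)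
        * (cross (pu ψ q) (pv ψ q) i * cross (pu φ q) (pv φ q) j)) p = 0 := by
  have hUo := hφ.1
  have hφs := hφ.2.1
  have hψs := hψ.2.1
  have hlams := hφ.2.2.1
  have hL : 0 < lam p := (hφ.2.2.2 p hp).1
  have hL0 : lam p ≠ 0 := ne_of_gt hL
  have hL2 : lam p ^ 2 ≠ 0 := pow_ne_zero 2 hL0
  have hdl : DifferentiableAt ℝ lam p := diffAt_of_cdo hUo hlams hp
  have hdl2 : DifferentiableAt ℝ (fun q => lam q ^ 2) p := hdl.pow 2
  have hdinv : DifferentiableAt ℝ (fun q => (lam q ^ 2)⁻¹) p := hdl2.inv hL2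
  have hdφu := diffAt_of_cdo hUo (cdo_pu hUo hφs) hp
  have hdφv := diffAt_of_cdo hUo (cdo_pv hUo hφs) hp
  have hdψu := diffAt_of_cdo hUo (cdo_pu hUo hψs) hp
  have hdψv := diffAt_of_cdo hUo (cdo_pv hUo hψs) hp
  have hsyφ : pu (pv φ) p = pv (pu φ) p := mixed_symm hUo hφs hp
  have hsyψ : pu (pv ψ) p = pv (pu ψ) p := mixed_symm hUo hψs hp
  have hXu : DifferentiableAt ℝ (fun q => pu ψ q i) p :=
    (hasFDerivAt_proj hdψu i).differentiableAt
  have hXv : DifferentiableAt ℝ (fun q => pv ψ q i) p :=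
    (hasFDerivAt_proj hdψv i).differentiableAt
  have hYu : DifferentiableAt ℝ (fun q => pu φ q j) p :=
    (hasFDerivAt_proj hdφu j).differentiableAt
  have hYv : DifferentiableAt ℝ (fun q => pv φ q j) p :=
    (hasFDerivAt_proj hdφv j).differentiableAt
  have hcψ : DifferentiableAt ℝ (fun q => cross (pu ψ q) (pv ψ q) i) p :=
    cross_diffAt hUo hψs hp i
  have hcφ : DifferentiableAt ℝ (fun q => cross (pu φ q) (pv φ q) j) p :=
    cross_diffAt hUo hφs hp j
  rw [pv_add (hdinv.fun_mul ((hXu.fun_mul hYu).fun_add (hXv.fun_mul hYv)))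
      ((hdinv.fun_mul hdinv).fun_mul (hcψ.fun_mul hcφ)),
    pv_mul hdinv ((hXu.fun_mul hYu).fun_add (hXv.fun_mul hYv)),
    pv_mul (hdinv.fun_mul hdinv) (hcψ.fun_mul hcφ),
    pv_mul hdinv hdinv,
    pv_inv hdl2 hL2, pv_sq hdl,
    pv_add (hXu.fun_mul hYu) (hXv.fun_mul hYv),
    pv_mul hXu hYu, pv_mul hXv hYv,
    pv_mul hcψ hcφ,
    pv_proj hdψu i, pv_proj hdψv i, pv_proj hdφu j, pv_proj hdφv j,
    pv_crossfun hUo hψs hp i, pv_crossfun hUo hφs hp j,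
    ← hsyφ, ← hsyψ,
    wein_v hψ hp i, wein_v hφ hp j,
    (frame_exp hψ hp i).2.1, (frame_exp hψ hp i).2.2,
    (frame_exp hφ hp j).2.1, (frame_exp hφ hp j).2.2,
    hPf, hPg]
  field_simp
  ring

end MMat
/-- Theorem 1, λ-H representation: uniqueness up to rigid motion:
two conformal immersions on a nonempty connected open set with the same conformal
factor, the same mean curvature and the same μ differ by a rigid motion
ψ = A φ + b with A ∈ SO(3). -/
theorem lambdaH_representation_uniqueness_up_to_rigid_motion
    (U : Set (ℝ × ℝ)) (hU : IsConnected U)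
    (φ ψ : ℝ × ℝ → E3) (lam : ℝ × ℝ → ℝ)
    (hφ : IsConfImm U φ lam) (hψ : IsConfImm U ψ lam)
    (hH : ∀ p ∈ U, mcurv φ lam p = mcurv ψ lam p)
    (hmu : ∀ p ∈ U, muQ φ p = muQ ψ p) :
    ∃ A : Matrix (Fin 3) (Fin 3) ℝ,
      A.transpose * A = 1 ∧ A.det = 1 ∧
        ∃ b : E3, ∀ p ∈ U, ∀ i, ψ p i = (∑ j, A i j * φ p j) + b i := by
  classical
  obtain ⟨p₀, hp₀⟩ := hU.nonempty
  have hUc : IsPreconnected U := hU.isPreconnected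
  have hUo := hφ.1
  have hφs := hφ.2.1
  have hψs := hψ.2.1
  have hlams := hφ.2.2.1
  -- Step 1: the second fundamental forms agree
  have hefg : ∀ p ∈ U, Pe ψ p = Pe φ p ∧ Pf ψ p = Pf φ p ∧ Pg ψ p = Pg φ p := by
    intro p hp
    have hL : 0 < lam p := (hφ.2.2.2 p hp).1
    have hL2 : lam p ^ 2 ≠ 0 := pow_ne_zero 2 (ne_of_gt hL)
    have h1 := hH p hp
    rw [mcurv_val hφ hp, mcurv_val hψ hp] at h1
    have h2 := hmu p hp
    rw [muQ_val hφ hp, muQ_val hψ hp, Complex.ext_iff] at h2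
    obtain ⟨h2re, h2im⟩ := h2
    simp only [Complex.sub_re, Complex.ofReal_re, Complex.mul_re, Complex.I_re,
      Complex.ofReal_im, Complex.I_im, Complex.sub_im, Complex.mul_im] at h2re h2im
    field_simp at h1 h2re h2im
    refine ⟨by linarith, by linarith, by linarith⟩
  -- Step 2: the transition matrix function
  set m : Fin 3 → Fin 3 → (ℝ × ℝ) → ℝ := fun i j q =>
    (lam q ^ 2)⁻¹ * (pu ψ q i * pu φ q j + pv ψ q i * pv φ q j)
    + ((lam q ^ 2)⁻¹ * (lam q ^ 2)⁻¹)
      * (cross (pu ψ q) (pv ψ q) i * cross (pu φ q) (pv φ q) j) with hmdef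
  have hmder : ∀ i j : Fin 3, ∀ p ∈ U, HasFDerivAt (m i j) (0 : ℝ × ℝ →L[ℝ] ℝ) p := by
    intro i j p hp
    have hd : DifferentiableAt ℝ (m i j) p := m_diffAt hφ hψ hp i j
    have h0 : fderiv ℝ (m i j) p = 0 := by
      apply clm_zero_of_basis
      · exact m_pu_zero hφ hψ hp (hefg p hp).1 (hefg p hp).2.1 (hefg p hp).2.2 i j
      · exact m_pv_zero hφ hψ hp (hefg p hp).1 (hefg p hp).2.1 (hefg p hp).2.2 i j
    have h := hd.hasFDerivAt
    rwa [h0] at h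
  have hconst : ∀ i j : Fin 3, ∀ p ∈ U, m i j p = m i j p₀ :=
    fun i j p hp => const_of_deriv_zero hUo hUc (hmder i j) hp hp₀
  -- Step 3: the key evaluation identity
  have hkey : ∀ p ∈ U, ∀ i : Fin 3, ∀ x : E3,
      (∑ j, m i j p * x j) =
        (lam p ^ 2)⁻¹ * (ip (pu φ p) x * pu ψ p i + ip (pv φ p) x * pv ψ p i)
        + ((lam p ^ 2)⁻¹ * (lam p ^ 2)⁻¹)
          * (ip (cross (pu φ p) (pv φ p)) x * cross (pu ψ p) (pv ψ p) i) := by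
    intro p hp i x
    rw [Fin.sum_univ_three]
    simp only [hmdef]
    rw [ip_eq, ip_eq, ip_eq]
    ring
  -- Step 4: the matrix maps the φ-frame to the ψ-frame
  have hmapu : ∀ p ∈ U, ∀ i : Fin 3, (∑ j, m i j p * pu φ p j) = pu ψ p i := by
    intro p hp i
    obtain ⟨hL, hxx, hyy, hxy⟩ := hφ.2.2.2 p hp
    have hL2 : lam p ^ 2 ≠ 0 := pow_ne_zero 2 (ne_of_gt hL)
    rw [hkey p hp i, hxx, ip_comm (pv φ p) (pu φ p), hxy, T_cross_left]
    field_simp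
    ring
  have hmapv : ∀ p ∈ U, ∀ i : Fin 3, (∑ j, m i j p * pv φ p j) = pv ψ p i := by
    intro p hp i
    obtain ⟨hL, hxx, hyy, hxy⟩ := hφ.2.2.2 p hp
    have hL2 : lam p ^ 2 ≠ 0 := pow_ne_zero 2 (ne_of_gt hL)
    rw [hkey p hp i, hyy, hxy, T_cross_right]
    field_simp
    ring
  have hmapc : ∀ p ∈ U, ∀ i : Fin 3,
      (∑ j, m i j p * cross (pu φ p) (pv φ p) j) = cross (pu ψ p) (pv ψ p) i := by
    intro p hp i
    have hL : 0 < lam p := (hφ.2.2.2 p hp).1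
    have hL2 : lam p ^ 2 ≠ 0 := pow_ne_zero 2 (ne_of_gt hL)
    rw [hkey p hp i, ip_comm (pu φ p) _, T_cross_left, ip_comm (pv φ p) _, T_cross_right,
      cross_ip_self hφ hp]
    field_simp
    ring
  -- Step 5: Gram identity (rows are orthonormal)
  have hsingle : ∀ (k : Fin 3) (x : E3), ip (EuclideanSpace.single k (1:ℝ)) x = x k := by
    intro k x
    fin_cases k <;> simp [ip_eq, EuclideanSpace.single_apply]
  have hGram : ∀ p ∈ U, ∀ i k : Fin 3,
      (∑ j, m i j p * m k j p) = if i = k then 1 else 0 := by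
    intro p hp i k
    obtain ⟨hL, hxxψ, hyyψ, hxyψ⟩ := hψ.2.2.2 p hp
    have hL0 : lam p ≠ 0 := ne_of_gt hL
    have hL2 : lam p ^ 2 ≠ 0 := pow_ne_zero 2 hL0
    set w : E3 := (WithLp.equiv 2 (Fin 3 → ℝ)).symm (fun j => m k j p) with hwdef
    have hwj : ∀ j : Fin 3, w j = m k j p := fun j => rfl
    have h1 : (∑ j, m i j p * m k j p) = ∑ j, m i j p * w j :=
      Finset.sum_congr rfl fun j _ => by rw [hwj]
    have hipu : ip (pu φ p) w = pu ψ p k := by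
      have h := hmapu p hp k
      rw [Fin.sum_univ_three] at h
      rw [ip_eq, hwj, hwj, hwj]
      linear_combination h
    have hipv : ip (pv φ p) w = pv ψ p k := by
      have h := hmapv p hp k
      rw [Fin.sum_univ_three] at h
      rw [ip_eq, hwj, hwj, hwj]
      linear_combination h
    have hipc : ip (cross (pu φ p) (pv φ p)) w = cross (pu ψ p) (pv ψ p) k := by
      have h := hmapc p hp k
      rw [Fin.sum_univ_three] at h
      rw [ip_eq, hwj, hwj, hwj]
      linear_combination h
    have hδ := expand_of_ips hL0 hxxψ hyyψ hxyψ (hsingle k (pu ψ p)) (hsingle k (pv ψ p))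
      (hsingle k (cross (pu ψ p) (pv ψ p))) i
    rw [EuclideanSpace.single_apply] at hδ
    rw [h1, hkey p hp i w, hipu, hipv, hipc, hδ]
    field_simp
  -- Step 6: assemble the matrix
  set A : Matrix (Fin 3) (Fin 3) ℝ := Matrix.of (fun i j => m i j p₀) with hAdef
  have hAentry : ∀ i j, A i j = m i j p₀ := fun i j => rfl
  have hAAT : A * A.transpose = 1 := by
    ext i k
    rw [Matrix.mul_apply]
    have : (∑ j, A i j * A.transpose j k) = ∑ j, m i j p₀ * m k j p₀ :=
      Finset.sum_congr rfl fun j _ => by rw [hAentry, Matrix.transpose_apply, hAentry]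
    rw [this, hGram p₀ hp₀ i k, Matrix.one_apply]
  have hATA : A.transpose * A = 1 := mul_eq_one_comm.1 hAAT
  -- Step 7: determinant
  have hdetA : A.det = 1 := by
    set B : Matrix (Fin 3) (Fin 3) ℝ :=
      Matrix.of (fun r k => ![pu φ p₀, pv φ p₀, cross (pu φ p₀) (pv φ p₀)] k r) with hBdef
    set Bψ : Matrix (Fin 3) (Fin 3) ℝ :=
      Matrix.of (fun r k => ![pu ψ p₀, pv ψ p₀, cross (pu ψ p₀) (pv ψ p₀)] k r) with hBψdef
    have hAB : A * B = Bψ := by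
      ext r k
      rw [Matrix.mul_apply]
      fin_cases k
      · simpa [hBdef, hBψdef, hAentry] using hmapu p₀ hp₀ r
      · simpa [hBdef, hBψdef, hAentry] using hmapv p₀ hp₀ r
      · simpa [hBdef, hBψdef, hAentry] using hmapc p₀ hp₀ r
    have hdetB : B.det = lam p₀ ^ 4 := by
      have hCC := cross_ip_self hφ hp₀
      rw [ip_eq, cross0, cross1, cross2] at hCC
      rw [Matrix.det_fin_three]
      simp only [hBdef, Matrix.of_apply, Matrix.cons_val_zero, Matrix.cons_val_one,
        Matrix.head_cons, Matrix.cons_val_two, Matrix.tail_cons, cross0, cross1, cross2]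
      linear_combination hCC
    have hdetBψ : Bψ.det = lam p₀ ^ 4 := by
      have hCC := cross_ip_self hψ hp₀
      rw [ip_eq, cross0, cross1, cross2] at hCC
      rw [Matrix.det_fin_three]
      simp only [hBψdef, Matrix.of_apply, Matrix.cons_val_zero, Matrix.cons_val_one,
        Matrix.head_cons, Matrix.cons_val_two, Matrix.tail_cons, cross0, cross1, cross2]
      linear_combination hCC
    have hL : 0 < lam p₀ := (hφ.2.2.2 p₀ hp₀).1
    have hL4 : lam p₀ ^ 4 ≠ 0 := pow_ne_zero 4 (ne_of_gt hL)
    have hd : A.det * B.det = Bψ.det := by rw [← Matrix.det_mul, hAB]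
    rw [hdetB, hdetBψ] at hd
    calc A.det = A.det * (lam p₀ ^ 4) / (lam p₀ ^ 4) := by field_simp
    _ = (lam p₀ ^ 4) / (lam p₀ ^ 4) := by rw [hd]
    _ = 1 := by field_simp
  -- Step 8: the translation vector
  refine ⟨A, hATA, hdetA, (WithLp.equiv 2 (Fin 3 → ℝ)).symm
    (fun i => ψ p₀ i - (A i 0 * φ p₀ 0 + A i 1 * φ p₀ 1 + A i 2 * φ p₀ 2)), ?_⟩
  intro p hp i
  have hdφ := fun q (hq : q ∈ U) => diffAt_of_cdo hUo hφs hq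
  have hdψ := fun q (hq : q ∈ U) => diffAt_of_cdo hUo hψs hq
  have hder : ∀ q ∈ U, HasFDerivAt
      (fun q => ψ q i - (A i 0 * φ q 0 + A i 1 * φ q 1 + A i 2 * φ q 2))
      (0 : ℝ × ℝ →L[ℝ] ℝ) q := by
    intro q hq
    have d1 : DifferentiableAt ℝ (fun t => ψ t i) q :=
      (hasFDerivAt_proj (hdψ q hq) i).differentiableAt
    have d2 : ∀ j : Fin 3, DifferentiableAt ℝ (fun t => φ t j) q :=
      fun j => (hasFDerivAt_proj (hdφ q hq) j).differentiableAt
    have d3 : DifferentiableAt ℝ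
        (fun t => A i 0 * φ t 0 + A i 1 * φ t 1 + A i 2 * φ t 2) q :=
      (((d2 0).const_mul _).add ((d2 1).const_mul _)).add ((d2 2).const_mul _)
    have hd : DifferentiableAt ℝ
        (fun q => ψ q i - (A i 0 * φ q 0 + A i 1 * φ q 1 + A i 2 * φ q 2)) q := d1.sub d3
    have h0 : fderiv ℝ (fun q => ψ q i - (A i 0 * φ q 0 + A i 1 * φ q 1 + A i 2 * φ q 2)) q
        = 0 := by
      apply clm_zero_of_basis
      · show pu _ q = 0
        rw [pu_sub d1 d3, pu_add (((d2 0).const_mul _).fun_add ((d2 1).const_mul _))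
            ((d2 2).const_mul _),
          pu_add ((d2 0).const_mul _) ((d2 1).const_mul _),
          pu_const_mul _ (d2 0), pu_const_mul _ (d2 1), pu_const_mul _ (d2 2),
          pu_proj (hdψ q hq) i, pu_proj (hdφ q hq) 0, pu_proj (hdφ q hq) 1,
          pu_proj (hdφ q hq) 2]
        have h := hmapu q hq i
        rw [Fin.sum_univ_three, hconst i 0 q hq, hconst i 1 q hq, hconst i 2 q hq] at h
        rw [hAentry, hAentry, hAentry]
        linear_combination -h
      · show pv _ q = 0
        rw [pv_sub d1 d3, pv_add (((d2 0).const_mul _).fun_add ((d2 1).const_mul _))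
            ((d2 2).const_mul _),
          pv_add ((d2 0).const_mul _) ((d2 1).const_mul _),
          pv_const_mul _ (d2 0), pv_const_mul _ (d2 1), pv_const_mul _ (d2 2),
          pv_proj (hdψ q hq) i, pv_proj (hdφ q hq) 0, pv_proj (hdφ q hq) 1,
          pv_proj (hdφ q hq) 2]
        have h := hmapv q hq i
        rw [Fin.sum_univ_three, hconst i 0 q hq, hconst i 1 q hq, hconst i 2 q hq] at h
        rw [hAentry, hAentry, hAentry]
        linear_combination -h
    have h := hd.hasFDerivAt
    rwa [h0] at h
  have hcc := const_of_deriv_zero hUo hUc hder hp hp₀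
  rw [Fin.sum_univ_three]
  have hbapp : ((WithLp.equiv 2 (Fin 3 → ℝ)).symm
      (fun i => ψ p₀ i - (A i 0 * φ p₀ 0 + A i 1 * φ p₀ 1 + A i 2 * φ p₀ 2))) i
      = ψ p₀ i - (A i 0 * φ p₀ 0 + A i 1 * φ p₀ 1 + A i 2 * φ p₀ 2) := rfl
  rw [hbapp]
  linarith [hcc]
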